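/- Let M be a nonzero comultiplication R-module with exactly n < ∞ minimal submodules, n ≥ 2. Then the independence number of the large sum graph Ǵ(M) equals n; moreover the set of submodules of the form Σ_{j≠i} S_j (for S_j ranging over minimal submodules) is an independent set of size n. -/

import Mathlib

/-- `M` is a comultiplication `R`-module: every submodule is of the form `(0 :_M I)`. -/
def IsComultiplication (R M : Type*) [CommRing R] [AddCommGroup M] [Module R M] : Prop :=
  ∀ N : Submodule R M, ∃ I : Ideal R, ∀ m : M, m ∈ N ↔ ∀ r ∈ I, r • m = 0

/-- A submodule is large (essential) if it meets every nonzero submodule nontrivially. -/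
def IsLarge {R M : Type*} [CommRing R] [AddCommGroup M] [Module R M]
    (N : Submodule R M) : Prop :=
  ∀ L : Submodule R M, L ≠ ⊥ → N ⊓ L ≠ ⊥

/-- The vertices of the large sum graph: nonzero non-large submodules. -/
abbrev LargeSumVtx (R M : Type*) [CommRing R] [AddCommGroup M] [Module R M] :=
  {N : Submodule R M // N ≠ ⊥ ∧ ¬ IsLarge N}

/-- The large sum graph: distinct nonzero non-large submodules `N, K` are adjacent
iff `N + K` is not large. -/
def largeSumGraph (R M : Type*) [CommRing R] [AddCommGroup M] [Module R M] :
    SimpleGraph (LargeSumVtx R M) where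
  Adj N K := N ≠ K ∧ ¬ IsLarge (N.1 ⊔ K.1)
  symm := ⟨fun a b ⟨h1, h2⟩ => ⟨h1.symm, by rwa [sup_comm]⟩⟩
  loopless := ⟨fun a h => h.1 rfl⟩

section Aux

variable {R M : Type*} [CommRing R] [AddCommGroup M] [Module R M]

open Submodule

/-- The submodule of elements annihilated by an ideal, `(0 :_M I)`. -/
def torsOf (I : Ideal R) : Submodule R M where
  carrier := {m | ∀ r ∈ I, r • m = 0}
  zero_mem' := fun r _ => smul_zero r
  add_mem' := fun ha hb r hr => by
    rw [smul_add, ha r hr, hb r hr, add_zero]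
  smul_mem' := fun c m hm r hr => by
    rw [smul_comm, hm r hr, smul_zero]

lemma mem_torsOf {I : Ideal R} {m : M} : m ∈ (torsOf I : Submodule R M) ↔ ∀ r ∈ I, r • m = 0 :=
  Iff.rfl

lemma torsOf_anti {I J : Ideal R} (h : I ≤ J) : (torsOf J : Submodule R M) ≤ torsOf I :=
  fun _ hm r hr => hm r (h hr)

lemma le_torsOf_annihilator (N : Submodule R M) : N ≤ torsOf N.annihilator :=
  fun m hm r hr => Submodule.mem_annihilator.mp hr m hm

/-- In a comultiplication module, every submodule equals the torsion of its annihilator. -/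
lemma comult_eq_torsOf (hc : IsComultiplication R M) (N : Submodule R M) :
    N = torsOf N.annihilator := by
  obtain ⟨I, hI⟩ := hc N
  have hNI : N = torsOf I := Submodule.ext fun m => hI m
  have hIle : I ≤ N.annihilator := fun r hr =>
    Submodule.mem_annihilator.mpr fun n hn => (hI n).mp hn r hr
  exact le_antisymm (le_torsOf_annihilator N)
    (le_trans (torsOf_anti hIle) (le_of_eq hNI.symm))

lemma annihilator_inj (hc : IsComultiplication R M) {N K : Submodule R M}
    (h : N.annihilator = K.annihilator) : N = K := by
  rw [comult_eq_torsOf hc N, comult_eq_torsOf hc K, h]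

lemma annihilator_sup (N K : Submodule R M) :
    (N ⊔ K).annihilator = N.annihilator ⊓ K.annihilator := by
  refine le_antisymm (le_inf (Submodule.annihilator_mono le_sup_left)
    (Submodule.annihilator_mono le_sup_right)) ?_
  intro r hr
  rw [Submodule.mem_annihilator]
  intro m hm
  obtain ⟨a, ha, b, hb, rfl⟩ := Submodule.mem_sup.mp hm
  rw [smul_add, Submodule.mem_annihilator.mp hr.1 a ha,
    Submodule.mem_annihilator.mp hr.2 b hb, add_zero]

lemma annihilator_ne_top {N : Submodule R M} (h : N ≠ ⊥) : N.annihilator ≠ ⊤ := by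
  intro htop
  exact h (Submodule.annihilator_eq_top_iff.mp htop)

/-- In a comultiplication module, every nonzero submodule contains an atom, whose
annihilator is a maximal ideal. -/
lemma exists_atom_le (hc : IsComultiplication R M) (N : Submodule R M) (hN : N ≠ ⊥) :
    ∃ S : Submodule R M, IsAtom S ∧ S ≤ N ∧ S.annihilator.IsMaximal := by
  obtain ⟨x, hxN, hx0⟩ := Submodule.exists_mem_ne_zero_of_ne_bot hN
  set X : Submodule R M := Submodule.span R {x} with hXdef
  have hXbot : X ≠ ⊥ := by
    simpa [hXdef, Submodule.span_singleton_eq_bot] using hx0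
  obtain ⟨p, hp, hAp⟩ := Ideal.exists_le_maximal _ (annihilator_ne_top hXbot)
  set K : Submodule R M := p • X with hKdef
  have hKX : K ≤ X := Submodule.smul_le_right
  have hKne : K ≠ X := by
    intro h
    obtain ⟨r, hr1, hr0⟩ :=
      Submodule.exists_sub_one_mem_and_smul_eq_zero_of_fg_of_le_smul p X
        (Submodule.fg_span_singleton x) (le_of_eq h.symm)
    have hrX : r ∈ X.annihilator := Submodule.mem_annihilator.mpr hr0
    have h1 : (1 : R) ∈ p := by
      have h2 : r - (r - 1) ∈ p := p.sub_mem (hAp hrX) hr1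
      simpa using h2
    exact hp.ne_top ((Ideal.eq_top_iff_one _).mpr h1)
  have hlt : X.annihilator < K.annihilator :=
    lt_of_le_of_ne (Submodule.annihilator_mono hKX)
      (fun h => hKne (annihilator_inj hc h.symm))
  obtain ⟨t, htK, htX⟩ := SetLike.exists_of_lt hlt
  set y : M := t • x with hydef
  have hy0 : y ≠ 0 := by
    intro h
    apply htX
    rw [Submodule.mem_annihilator]
    intro m hm
    obtain ⟨c, rfl⟩ := Submodule.mem_span_singleton.mp hm
    rw [smul_comm, hydef.symm, h, smul_zero]
  have hyN : y ∈ N := N.smul_mem t hxN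
  set S : Submodule R M := Submodule.span R {y} with hSdef
  have hSN : S ≤ N := (Submodule.span_singleton_le_iff_mem y N).mpr hyN
  have hSbot : S ≠ ⊥ := by
    simpa [hSdef, Submodule.span_singleton_eq_bot] using hy0
  have hpS : p ≤ S.annihilator := by
    intro m hm
    rw [Submodule.mem_annihilator]
    intro z hz
    obtain ⟨c, rfl⟩ := Submodule.mem_span_singleton.mp hz
    have hmx : m • x ∈ K := Submodule.smul_mem_smul hm (Submodule.mem_span_singleton_self x)
    have : t • (m • x) = 0 := Submodule.mem_annihilator.mp htK _ hmx
    calc m • c • y = c • (m • (t • x)) := by rw [hydef, smul_comm]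
    _ = c • (t • (m • x)) := by rw [smul_comm m t x]
    _ = 0 := by rw [this, smul_zero]
  have hSann : S.annihilator = p :=
    (hp.eq_of_le (annihilator_ne_top hSbot) hpS).symm
  have hmax : S.annihilator.IsMaximal := hSann ▸ hp
  refine ⟨S, ⟨hSbot, fun K' hK' => ?_⟩, hSN, hmax⟩
  by_contra hK'0
  have h1 : S.annihilator ≤ K'.annihilator := Submodule.annihilator_mono hK'.le
  have h2 : S.annihilator = K'.annihilator :=
    hmax.eq_of_le (annihilator_ne_top hK'0) h1
  exact hK'.ne (annihilator_inj hc h2).symm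

/-- The annihilator of an atom in a comultiplication module is a maximal ideal. -/
lemma atom_annihilator_isMaximal (hc : IsComultiplication R M) {S : Submodule R M}
    (hS : IsAtom S) : S.annihilator.IsMaximal := by
  obtain ⟨S', hS', hle, hmax⟩ := exists_atom_le hc S hS.1
  have : S' = S := by
    rcases lt_or_eq_of_le hle with h | h
    · exact absurd (hS.2 S' h) hS'.1
    · exact h
  rwa [this] at hmax

/-- Atoms are join-prime in a comultiplication module. -/
lemma atom_le_sup (hc : IsComultiplication R M) {S A B : Submodule R M} (hS : IsAtom S)
    (h : S ≤ A ⊔ B) : S ≤ A ∨ S ≤ B := by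
  have hm := atom_annihilator_isMaximal hc hS
  have hprime := hm.isPrime
  have hmul : A.annihilator * B.annihilator ≤ S.annihilator := by
    refine le_trans Ideal.mul_le_inf ?_
    rw [← _root_.annihilator_sup]
    exact Submodule.annihilator_mono h
  rcases hprime.mul_le.mp hmul with h' | h'
  · left
    calc S = torsOf S.annihilator := comult_eq_torsOf hc S
    _ ≤ torsOf A.annihilator := torsOf_anti h'
    _ = A := (comult_eq_torsOf hc A).symm
  · right
    calc S = torsOf S.annihilator := comult_eq_torsOf hc S
    _ ≤ torsOf B.annihilator := torsOf_anti h'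
    _ = B := (comult_eq_torsOf hc B).symm

lemma atom_le_finsetSup (hc : IsComultiplication R M) {S : Submodule R M} (hS : IsAtom S)
    (F : Finset (Submodule R M)) (h : S ≤ F.sup id) : ∃ t ∈ F, S ≤ t := by
  classical
  induction F using Finset.induction with
  | empty =>
    simp only [Finset.sup_empty] at h
    exact absurd (le_bot_iff.mp h) hS.1
  | insert a s ha ih =>
    rw [Finset.sup_insert] at h
    rcases atom_le_sup hc hS h with h' | h'
    · exact ⟨_, Finset.mem_insert_self _ _, h'⟩
    · obtain ⟨t, ht, hle⟩ := ih h'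
      exact ⟨t, Finset.mem_insert_of_mem ht, hle⟩

lemma atom_le_sSup (hc : IsComultiplication R M) {S : Submodule R M} (hS : IsAtom S)
    {T : Set (Submodule R M)} (hT : T.Finite) (h : S ≤ sSup T) : ∃ t ∈ T, S ≤ t := by
  have hcoe : T = ↑hT.toFinset := (Set.Finite.coe_toFinset hT).symm
  rw [hcoe, ← Finset.sup_id_eq_sSup] at h
  obtain ⟨t, ht, hle⟩ := atom_le_finsetSup hc hS _ h
  exact ⟨t, by rwa [Set.Finite.mem_toFinset hT] at ht, hle⟩

/-- A submodule of a comultiplication module is large iff it contains every atom. -/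
lemma isLarge_iff (hc : IsComultiplication R M) (L : Submodule R M) :
    IsLarge L ↔ ∀ S : Submodule R M, IsAtom S → S ≤ L := by
  constructor
  · intro h S hS
    have hmeet : L ⊓ S ≠ ⊥ := h S hS.1
    rcases lt_or_eq_of_le (inf_le_right : L ⊓ S ≤ S) with h' | h'
    · exact absurd (hS.2 _ h') hmeet
    · rw [← h']
      exact inf_le_left
  · intro h L' hL'
    obtain ⟨S, hS, hSL', _⟩ := exists_atom_le hc L' hL'
    intro hbot
    exact hS.1 (le_bot_iff.mp (hbot ▸ le_inf (h S hS) hSL'))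

end Aux

/-- If a nonzero comultiplication module has exactly `n ≥ 2` minimal submodules, then the
independence number of its large sum graph is `n`: the sums `Σ_{j ≠ i} S_j` form an independent
set of size `n`, and every independent set has at most `n` elements. -/
theorem stmt18 {R M : Type*} [CommRing R] [AddCommGroup M] [Module R M]
    [Nontrivial M] (hc : IsComultiplication R M)
    (hfin : {S : Submodule R M | IsAtom S}.Finite)
    (n : ℕ) (hn : Nat.card {S : Submodule R M | IsAtom S} = n) (hn2 : 2 ≤ n) :
    (∀ S : Submodule R M, IsAtom S →
      ∃ v : LargeSumVtx R M, v.1 = sSup {S' : Submodule R M | IsAtom S' ∧ S' ≠ S}) ∧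
    ({v : LargeSumVtx R M |
        ∃ S : Submodule R M, IsAtom S ∧
          v.1 = sSup {S' : Submodule R M | IsAtom S' ∧ S' ≠ S}}.Pairwise
      fun u w => ¬ (largeSumGraph R M).Adj u w) ∧
    Nat.card {v : LargeSumVtx R M |
        ∃ S : Submodule R M, IsAtom S ∧
          v.1 = sSup {S' : Submodule R M | IsAtom S' ∧ S' ≠ S}} = n ∧
    (∀ s : Set (LargeSumVtx R M),
      (s.Pairwise fun u w => ¬ (largeSumGraph R M).Adj u w) → Nat.card s ≤ n) := by
  set A : Set (Submodule R M) := {S : Submodule R M | IsAtom S} with hA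
  set NS : Submodule R M → Submodule R M :=
    fun S => sSup {S' : Submodule R M | IsAtom S' ∧ S' ≠ S} with hNS
  have hAfin0 : Finite ↥A := hfin
  have hAnontriv : Nontrivial ↥A := by
    rw [← Finite.one_lt_card_iff_nontrivial, hn]
    omega
  -- there is another atom
  have hother : ∀ S : Submodule R M, IsAtom S → ∃ S', IsAtom S' ∧ S' ≠ S := by
    intro S hS
    obtain ⟨b, hb⟩ := exists_ne (⟨S, hS⟩ : ↥A)
    exact ⟨b.1, b.2, fun h => hb (Subtype.ext h)⟩
  have key1 : ∀ S : Submodule R M, IsAtom S → NS S ≠ ⊥ := by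
    intro S hS
    obtain ⟨S', hS', hne⟩ := hother S hS
    intro h
    exact hS'.1 (le_bot_iff.mp (h ▸ le_sSup ⟨hS', hne⟩))
  have key2 : ∀ S : Submodule R M, IsAtom S → ¬ S ≤ NS S := by
    intro S hS h
    have hfin' : {S' : Submodule R M | IsAtom S' ∧ S' ≠ S}.Finite :=
      hfin.subset fun _ h => h.1
    obtain ⟨t, ⟨ht, htne⟩, hle⟩ := atom_le_sSup hc hS hfin' h
    have : S = t := by
      rcases lt_or_eq_of_le hle with h' | h'
      · exact absurd (ht.2 S h') hS.1
      · exact h'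
    exact htne this.symm
  have key3 : ∀ S : Submodule R M, IsAtom S → ¬ IsLarge (NS S) := by
    intro S hS h
    rw [isLarge_iff hc] at h
    exact key2 S hS (h S hS)
  -- the vertices
  have hvx : ∀ S : Submodule R M, IsAtom S → (NS S ≠ ⊥ ∧ ¬ IsLarge (NS S)) :=
    fun S hS => ⟨key1 S hS, key3 S hS⟩
  have hNSinj : ∀ S S' : Submodule R M, IsAtom S → IsAtom S' → NS S = NS S' → S = S' := by
    intro S S' hS hS' h
    by_contra hne
    have h1 : S ≤ NS S' := le_sSup ⟨hS, fun hh => hne hh⟩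
    rw [← h] at h1
    exact key2 S hS h1
  refine ⟨?_, ?_, ?_, ?_⟩
  · intro S hS
    exact ⟨⟨NS S, hvx S hS⟩, rfl⟩
  · -- pairwise independent
    rintro u ⟨S, hS, hu⟩ w ⟨S', hS', hw⟩ hne hadj
    obtain ⟨hne', hnl⟩ := hadj
    by_cases hSS : S = S'
    · exact hne (Subtype.ext (by rw [hu, hw, hSS]))
    · apply hnl
      rw [isLarge_iff hc]
      intro T hT
      by_cases hTS : T = S
      · have h1 : T ≤ (w : Submodule R M) := by
          rw [hw]; exact le_sSup ⟨hT, by rw [hTS]; exact hSS⟩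
        exact le_trans h1 le_sup_right
      · have h1 : T ≤ (u : Submodule R M) := by
          rw [hu]; exact le_sSup ⟨hT, hTS⟩
        exact le_trans h1 le_sup_left
  · -- cardinality
    set V : Set (LargeSumVtx R M) := {v : LargeSumVtx R M |
        ∃ S : Submodule R M, IsAtom S ∧
          v.1 = sSup {S' : Submodule R M | IsAtom S' ∧ S' ≠ S}} with hV
    have hbij : Function.Bijective
        (fun a : ↥A => (⟨⟨NS a.1, hvx a.1 a.2⟩, ⟨a.1, a.2, rfl⟩⟩ : ↥V)) := by
      constructor
      · intro a b hab
        have h1 : NS a.1 = NS b.1 := congrArg (fun v : ↥V => v.1.1) hab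
        exact Subtype.ext (hNSinj a.1 b.1 a.2 b.2 h1)
      · rintro ⟨v, S, hS, hv⟩
        refine ⟨⟨S, hS⟩, ?_⟩
        apply Subtype.ext
        apply Subtype.ext
        exact hv.symm
    rw [← hn]
    exact (Nat.card_eq_of_bijective _ hbij).symm
  · -- independence number upper bound
    intro s hpair
    have hAfin : Finite ↥A := hfin
    have hex : ∀ v : ↥s, ∃ T : Submodule R M, IsAtom T ∧ ¬ T ≤ v.1.1 := by
      intro v
      have hnl := v.1.2.2
      rw [isLarge_iff hc] at hnl
      push_neg at hnl
      exact hnl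
    choose g hg1 hg2 using hex
    have hginj : Function.Injective (fun v : ↥s => (⟨g v, hg1 v⟩ : ↥A)) := by
      intro v w hvw
      by_contra hne
      have hne1 : v.1 ≠ w.1 := fun h => hne (Subtype.ext h)
      have hnadj := hpair v.2 w.2 hne1
      have hlarge : IsLarge (v.1.1 ⊔ w.1.1) := by
        by_contra hnl
        exact hnadj ⟨hne1, hnl⟩
      have hgvw : g v = g w := congrArg Subtype.val hvw
      have hle : g v ≤ v.1.1 ⊔ w.1.1 :=
        (isLarge_iff hc _).mp hlarge (g v) (hg1 v)
      rcases atom_le_sup hc (hg1 v) hle with h' | h'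
      · exact hg2 v h'
      · rw [hgvw] at h'
        exact hg2 w h'
    calc Nat.card ↥s ≤ Nat.card ↥A := Nat.card_le_card_of_injective _ hginj
    _ = n := hn
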